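/- For every x ∈ (0, 1/2), (1/(2π)) log cos(2π(x − x²)) < −x², i.e., cos(2π(x−x²)) < exp(−2π x²). -/

import Mathlib

open Real Set

private lemma aux_nonneg {f f' : ℝ → ℝ} (hd : ∀ t, HasDerivAt f (f' t) t)
    (h0 : f 0 = 0) (hpos : ∀ t, 0 ≤ t → 0 ≤ f' t) {t : ℝ} (ht : 0 ≤ t) : 0 ≤ f t := by
  have hmono : MonotoneOn f (Ici (0:ℝ)) := by
    apply monotoneOn_of_deriv_nonneg (convex_Ici 0)
      (fun x _ => (hd x).differentiableAt.continuousAt.continuousWithinAt)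
      (fun x _ => (hd x).differentiableAt.differentiableWithinAt)
    intro x hx
    rw [(hd x).deriv]
    exact hpos x (le_of_lt (by simpa using hx))
  have := hmono (self_mem_Ici) (mem_Ici.2 ht) ht
  linarith [h0 ▸ this]

private lemma exp_neg_deriv (t : ℝ) :
    HasDerivAt (fun t : ℝ => Real.exp (-t)) (-Real.exp (-t)) t := by
  simpa [Function.comp_def] using ((Real.hasDerivAt_exp (-t)).comp t ((hasDerivAt_id t).neg))

private lemma E2 {t : ℝ} (ht : 0 ≤ t) : Real.exp (-t) ≤ 1 - t + t^2/2 := by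
  have h := aux_nonneg (f := fun t => 1 - t + t^2/2 - Real.exp (-t))
    (f' := fun t => -1 + t + Real.exp (-t)) ?_ (by simp) ?_ ht
  · linarith
  · intro t
    have := ((((hasDerivAt_const t (1:ℝ)).sub (hasDerivAt_id t)).add
      (((hasDerivAt_pow 2 t)).div_const 2)).sub (exp_neg_deriv t))
    exact this.congr_deriv (by norm_num)
  · intro t ht'
    nlinarith [Real.add_one_le_exp (-t)]

private lemma E3 {t : ℝ} (ht : 0 ≤ t) : 1 - t + t^2/2 - t^3/6 ≤ Real.exp (-t) := by
  have h := aux_nonneg (f := fun t => Real.exp (-t) - (1 - t + t^2/2 - t^3/6))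
    (f' := fun t => -Real.exp (-t) + 1 - t + t^2/2) ?_ (by simp) ?_ ht
  · linarith
  · intro t
    have := (exp_neg_deriv t).sub ((((hasDerivAt_const t (1:ℝ)).sub (hasDerivAt_id t)).add
      (((hasDerivAt_pow 2 t)).div_const 2)).sub (((hasDerivAt_pow 3 t)).div_const 6))
    exact this.congr_deriv (by norm_num; ring)
  · intro t ht'
    have := E2 ht'
    linarith

private lemma E4 {t : ℝ} (ht : 0 ≤ t) : Real.exp (-t) ≤ 1 - t + t^2/2 - t^3/6 + t^4/24 := by
  have h := aux_nonneg (f := fun t => (1 - t + t^2/2 - t^3/6 + t^4/24) - Real.exp (-t))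
    (f' := fun t => -1 + t - t^2/2 + t^3/6 + Real.exp (-t)) ?_ (by simp) ?_ ht
  · linarith
  · intro t
    have := (((((hasDerivAt_const t (1:ℝ)).sub (hasDerivAt_id t)).add
      (((hasDerivAt_pow 2 t)).div_const 2)).sub (((hasDerivAt_pow 3 t)).div_const 6)).add
      (((hasDerivAt_pow 4 t)).div_const 24)).sub (exp_neg_deriv t)
    exact this.congr_deriv (by norm_num; ring)
  · intro t ht'
    have := E3 ht'
    linarith

private lemma E5 {t : ℝ} (ht : 0 ≤ t) :
    1 - t + t^2/2 - t^3/6 + t^4/24 - t^5/120 ≤ Real.exp (-t) := by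
  have h := aux_nonneg (f := fun t => Real.exp (-t) - (1 - t + t^2/2 - t^3/6 + t^4/24 - t^5/120))
    (f' := fun t => -Real.exp (-t) + 1 - t + t^2/2 - t^3/6 + t^4/24) ?_ (by simp) ?_ ht
  · linarith
  · intro t
    have := (exp_neg_deriv t).sub ((((((hasDerivAt_const t (1:ℝ)).sub (hasDerivAt_id t)).add
      (((hasDerivAt_pow 2 t)).div_const 2)).sub (((hasDerivAt_pow 3 t)).div_const 6)).add
      (((hasDerivAt_pow 4 t)).div_const 24)).sub (((hasDerivAt_pow 5 t)).div_const 120))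
    exact this.congr_deriv (by norm_num; ring)
  · intro t ht'
    have := E4 ht'
    linarith

private lemma sin_ge_cubic {u : ℝ} (hu : 0 ≤ u) : u - u^3/6 ≤ Real.sin u := by
  have h := aux_nonneg (f := fun u => Real.sin u - (u - u^3/6))
    (f' := fun u => Real.cos u - (1 - u^2/2)) ?_ (by simp) ?_ hu
  · linarith
  · intro t
    have := (Real.hasDerivAt_sin t).sub ((hasDerivAt_id t).sub
      (((hasDerivAt_pow 3 t)).div_const 6))
    exact this.congr_deriv (by norm_num; ring)
  · intro t _
    have := Real.one_sub_sq_div_two_le_cos (x := t)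
    linarith

private lemma cos_le_quartic {θ : ℝ} (h0 : 0 ≤ θ) (h1 : θ ≤ 2) :
    Real.cos θ ≤ 1 - θ^2/2 + θ^4/24 := by
  have hu : (0:ℝ) ≤ θ/2 := by linarith
  have hs := sin_ge_cubic hu
  have hu2 : θ/2 ≤ 1 := by linarith
  have hnn : 0 ≤ θ/2 - (θ/2)^3/6 := by
    nlinarith [mul_nonneg (mul_nonneg hu (sub_nonneg.2 hu2)) (by linarith : (0:ℝ) ≤ 1 + θ/2)]
  have hsq : (θ/2 - (θ/2)^3/6)^2 ≤ Real.sin (θ/2)^2 := by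
    have hsin : 0 ≤ Real.sin (θ/2) := le_trans hnn hs
    nlinarith
  have hid : Real.sin (θ/2)^2 = 1/2 - Real.cos θ / 2 := by
    have := Real.sin_sq_eq_half_sub (θ/2)
    rw [this]; ring_nf
  rw [hid] at hsq
  nlinarith [hsq, pow_nonneg h0 6]

private lemma Hpoly (x : ℝ) (hx0 : 0 < x) (hx1 : x < 1/2) :
    1-3.141592*(1-x)^2+(31.0063/3)*x^2*(1-x)^4-3.141592*x^2
      +(2/3)*9.869607*x^4-(31.0062/3)*x^6+(2/15)*97.4101*x^8 < 0 := by
  nlinarith [sq_nonneg (x - 1/2), mul_pos hx0 hx0, sq_nonneg x, pow_pos hx0 4,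
    mul_pos (mul_pos hx0 hx0) hx0, sq_nonneg (x*(1-x)), sq_nonneg (x^2*(1-x)^2),
    mul_nonneg (mul_nonneg hx0.le hx0.le) (sq_nonneg (1-x)),
    mul_nonneg (sq_nonneg x) (sq_nonneg (1/2 - x)),
    mul_nonneg (mul_nonneg (pow_nonneg hx0.le 4) (by linarith : (0:ℝ) ≤ 1/2 - x)) (by linarith : (0:ℝ) ≤ 1/2 - x),
    pow_pos hx0 6, pow_pos hx0 8]

private lemma piA : Real.pi^2 < 9.869607 := by
  nlinarith [Real.pi_lt_d6, Real.pi_pos]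

private lemma piB : Real.pi^3 < 31.0063 := by
  nlinarith [Real.pi_lt_d6, Real.pi_pos, piA]

private lemma piC : (31.0062:ℝ) < Real.pi^3 := by
  nlinarith [Real.pi_gt_d6, Real.pi_pos, sq_nonneg (Real.pi - 3.141592)]

private lemma piD : Real.pi^4 < 97.4101 := by
  nlinarith [Real.pi_lt_d6, Real.pi_pos, piA, sq_nonneg (Real.pi^2 - 9.8696)]

set_option maxHeartbeats 1000000 in
open Real in
/-- For every `x ∈ (0, 1/2)`, `(1/(2π)) log cos(2π(x − x²)) < −x²`. -/
theorem log_cos_lt (x : ℝ) (hx : x ∈ Set.Ioo (0 : ℝ) (1/2)) :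
    (1 / (2 * π)) * Real.log (Real.cos (2 * π * (x - x^2))) < -x^2 := by
  obtain ⟨hx0, hx1⟩ := hx
  have hπ : (0:ℝ) < π := Real.pi_pos
  have hp1 : (3.141592 : ℝ) < π := Real.pi_gt_d6
  have hp2 : π < 3.141593 := Real.pi_lt_d6
  have hxx : 0 < x - x^2 := by
    have := mul_pos hx0 (show (0:ℝ) < 1 - x by linarith)
    linarith [this]
  have hxx4 : x - x^2 < 1/4 := by
    linarith [mul_pos (show (0:ℝ) < 1/2 - x by linarith) (show (0:ℝ) < 1/2 - x by linarith)]
  have hθ0 : 0 < 2*π*(x - x^2) := by positivity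
  have hprod : 0 < π * (1/4 - (x - x^2)) := mul_pos hπ (by linarith)
  have hθlt : 2*π*(x - x^2) < π/2 := by linarith [hprod]
  have hθ2 : 2*π*(x - x^2) ≤ 2 := by linarith [hprod, hp2]
  have hcos : 0 < Real.cos (2*π*(x - x^2)) := by
    apply Real.cos_pos_of_mem_Ioo
    constructor <;> [linarith; exact hθlt]
  have hA : π^2 < 9.869607 := piA
  have hB : π^3 < 31.0063 := piB
  have hC : (31.0062:ℝ) < π^3 := piC
  have hD : π^4 < 97.4101 := piD
  -- key polynomial inequality
  have hH := Hpoly x hx0 hx1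
  have h1x4 : (0:ℝ) ≤ x^2*(1-x)^4 := by positivity
  have hx4 : (0:ℝ) ≤ x^4 := by positivity
  have hx6 : (0:ℝ) ≤ x^6 := by positivity
  have hx8 : (0:ℝ) ≤ x^8 := by positivity
  have hG : 1 - π*(1-x)^2 + (π^3/3)*x^2*(1-x)^4 - π*x^2 + (2/3)*π^2*x^4
      - (π^3/3)*x^6 + (2/15)*π^4*x^8 < 0 := by
    have e1 := mul_le_mul_of_nonneg_right hp1.le (sq_nonneg (1-x))
    have e2 := mul_le_mul_of_nonneg_right hp1.le (sq_nonneg x)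
    have e3 := mul_le_mul_of_nonneg_right (show π^3/3 ≤ 31.0063/3 by linarith) h1x4
    have e4 := mul_le_mul_of_nonneg_right (show π^2 ≤ 9.869607 by linarith) hx4
    have e5 := mul_le_mul_of_nonneg_right (show (31.0062:ℝ)/3 ≤ π^3/3 by linarith) hx6
    have e6 := mul_le_mul_of_nonneg_right (show π^4 ≤ 97.4101 by linarith) hx8
    linarith [hH, e1, e2, e3, e4, e5, e6]
  have hmid : 1 - (2*π*(x - x^2))^2/2 + (2*π*(x - x^2))^4/24 <
      1 - (2*π*x^2) + (2*π*x^2)^2/2 - (2*π*x^2)^3/6 + (2*π*x^2)^4/24 - (2*π*x^2)^5/120 := by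
    have hpx : (0:ℝ) < 2*π*x^2 := by positivity
    linarith [mul_pos hpx (neg_pos.2 hG)]
  have ht0 : (0:ℝ) ≤ 2*π*x^2 := by positivity
  have key : Real.cos (2*π*(x - x^2)) < Real.exp (-(2*π*x^2)) := by
    calc Real.cos (2*π*(x - x^2)) ≤ 1 - (2*π*(x - x^2))^2/2 + (2*π*(x - x^2))^4/24 :=
          cos_le_quartic hθ0.le hθ2
      _ < 1 - (2*π*x^2) + (2*π*x^2)^2/2 - (2*π*x^2)^3/6 + (2*π*x^2)^4/24 - (2*π*x^2)^5/120 := hmid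
      _ ≤ Real.exp (-(2*π*x^2)) := E5 ht0
  rw [show (1/(2*π)) * Real.log (Real.cos (2*π*(x - x^2))) =
      Real.log (Real.cos (2*π*(x - x^2))) / (2*π) by ring,
    div_lt_iff₀ (by positivity), Real.log_lt_iff_lt_exp hcos]
  calc Real.cos (2*π*(x - x^2)) < Real.exp (-(2*π*x^2)) := key
    _ = Real.exp (-x^2 * (2*π)) := by ring_nf
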